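/- arXiv:1909.00566 — 3 statements merged into one kernel-verified Lean document; each statement's English description precedes it below -/
import Mathlib

section
/- Let L be a linear subspace of the space S^n of real symmetric n×n matrices whose intersection with the positive definite cone S^n_+ is nonempty, and let W be a positive definite real symmetric n×n matrix. Then there exists a unique Σ̂ ∈ L ∩ S^n_+ maximizing the dual log-likelihood ℓ∨ over L ∩ S^n_+, i.e. ℓ∨(Σ) < ℓ∨(Σ̂) for every Σ ∈ L ∩ S^n_+ with Σ ≠ Σ̂. -/
open Matrix

variable {n : ℕ}

lemma dot_single_single (A : Matrix (Fin n) (Fin n) ℝ) (i j : Fin n) :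
    (Pi.single i 1 : Fin n → ℝ) ⬝ᵥ A *ᵥ (Pi.single j 1) = A i j := by
  simp [dotProduct, mulVec, Pi.single_apply]

lemma psd_diag_nonneg {A : Matrix (Fin n) (Fin n) ℝ} (hA : A.PosSemidef) (i : Fin n) :
    0 ≤ A i i := by
  simpa [dot_single_single] using hA.dotProduct_mulVec_nonneg (Pi.single i 1)

lemma psd_trace_nonneg {A : Matrix (Fin n) (Fin n) ℝ} (hA : A.PosSemidef) :
    0 ≤ A.trace :=
  Finset.sum_nonneg fun i _ => psd_diag_nonneg hA i

lemma diag_le_trace {A : Matrix (Fin n) (Fin n) ℝ} (hA : A.PosSemidef) (i : Fin n) :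
    A i i ≤ A.trace := by
  have := fun j => psd_diag_nonneg hA j
  calc A i i = ∑ j ∈ {i}, A j j := by simp
  _ ≤ ∑ j, A j j := Finset.sum_le_sum_of_subset_of_nonneg (Finset.subset_univ _)
      (fun j _ _ => this j)
  _ = A.trace := rfl

lemma psd_entry_le_trace {A : Matrix (Fin n) (Fin n) ℝ} (hA : A.PosSemidef) (i j : Fin n) :
    |A i j| ≤ A.trace := by
  have hsym : A j i = A i j := by
    calc A j i = Aᴴ i j := rfl
    _ = A i j := by rw [hA.1]
  have expand1 : ∀ x y : Fin n → ℝ, (x + y) ⬝ᵥ A *ᵥ (x + y)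
      = x ⬝ᵥ A *ᵥ x + x ⬝ᵥ A *ᵥ y + y ⬝ᵥ A *ᵥ x + y ⬝ᵥ A *ᵥ y := by
    intro x y; simp [Matrix.mulVec_add, dotProduct_add, add_dotProduct]; ring
  have expand2 : ∀ x y : Fin n → ℝ, (x - y) ⬝ᵥ A *ᵥ (x - y)
      = x ⬝ᵥ A *ᵥ x - x ⬝ᵥ A *ᵥ y - y ⬝ᵥ A *ᵥ x + y ⬝ᵥ A *ᵥ y := by
    intro x y; simp [Matrix.mulVec_sub, dotProduct_sub, sub_dotProduct]; ring
  have hplus := hA.dotProduct_mulVec_nonneg (Pi.single i 1 + Pi.single j 1)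
  have hminus := hA.dotProduct_mulVec_nonneg (Pi.single i 1 - Pi.single j 1)
  rw [star_trivial, expand1, dot_single_single, dot_single_single, dot_single_single,
    dot_single_single] at hplus
  rw [star_trivial, expand2, dot_single_single, dot_single_single, dot_single_single,
    dot_single_single] at hminus
  have h1 := diag_le_trace hA i
  have h2 := diag_le_trace hA j
  have h3 := psd_diag_nonneg hA i
  have h4 := psd_diag_nonneg hA j
  rw [abs_le]
  constructor <;> nlinarith [hsym]

open scoped MatrixOrder in
lemma psd_trace_mul_nonneg {A B : Matrix (Fin n) (Fin n) ℝ} (hA : A.PosSemidef)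
    (hB : B.PosSemidef) : 0 ≤ (A * B).trace := by
  obtain ⟨C, rfl⟩ : ∃ C : Matrix (Fin n) (Fin n) ℝ, B = Cᴴ * C := ⟨CFC.sqrt B, by rw [(CFC.sqrt_nonneg B).posSemidef.1.eq, CFC.sqrt_mul_sqrt_self B hB.nonneg]⟩
  have : (A * (Cᴴ * C)).trace = (C * A * Cᴴ).trace := by
    rw [← Matrix.mul_assoc, Matrix.trace_mul_comm, ← Matrix.mul_assoc]
  rw [this]
  exact psd_trace_nonneg (hA.mul_mul_conjTranspose_same C)

lemma herm_trace_eq_sum {A : Matrix (Fin n) (Fin n) ℝ} (hA : A.IsHermitian) :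
    A.trace = ∑ i, hA.eigenvalues i := by
  conv_lhs => rw [hA.spectral_theorem, Unitary.conjStarAlgAut_apply]
  rw [Matrix.trace_mul_cycle]
  have hU := (Matrix.mem_unitaryGroup_iff').mp (hA.eigenvectorUnitary).2
  rw [hU, Matrix.one_mul, Matrix.trace_diagonal]
  simp

lemma psd_det_le {A : Matrix (Fin n) (Fin n) ℝ} (hA : A.PosSemidef) :
    A.det ≤ A.trace ^ n := by
  rw [hA.1.det_eq_prod_eigenvalues]
  have h1 : ∀ i, 0 ≤ hA.1.eigenvalues i := hA.eigenvalues_nonneg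
  have h2 : ∀ i : Fin n, hA.1.eigenvalues i ≤ A.trace := by
    intro i
    rw [herm_trace_eq_sum hA.1]
    exact Finset.single_le_sum (fun j _ => h1 j) (Finset.mem_univ i)
  calc (∏ i, (hA.1.eigenvalues i : ℝ)) ≤ ∏ _i : Fin n, A.trace :=
        Finset.prod_le_prod (fun i _ => h1 i) (fun i _ => h2 i)
  _ = A.trace ^ n := by simp [Finset.prod_const]

lemma posDef_of_det_pos {A : Matrix (Fin n) (Fin n) ℝ} (hA : A.PosSemidef)
    (hdet : 0 < A.det) : A.PosDef := by
  refine posDef_iff_dotProduct_mulVec.mpr ⟨hA.1, fun x hx => ?_⟩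
  rcases lt_or_eq_of_le (hA.dotProduct_mulVec_nonneg x) with h | h
  · exact h
  · exfalso
    have hAx : A *ᵥ x = 0 := (hA.dotProduct_mulVec_zero_iff x).mp h.symm
    have hunit : IsUnit A := (Matrix.isUnit_iff_isUnit_det A).mpr hdet.ne'.isUnit
    have := congrArg (fun v => A⁻¹ *ᵥ v) hAx
    simp only [Matrix.mulVec_mulVec, Matrix.nonsing_inv_mul A hdet.ne'.isUnit,
      Matrix.one_mulVec, Matrix.mulVec_zero] at this
    exact hx this

lemma exists_eps {W : Matrix (Fin n) (Fin n) ℝ} (hW : W.PosDef) :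
    ∃ ε : ℝ, 0 < ε ∧ (W - ε • 1).PosSemidef := by
  rcases isEmpty_or_nonempty (Fin n) with h | h
  · exact ⟨1, one_pos, Subsingleton.elim (0 : Matrix (Fin n) (Fin n) ℝ) (W - (1:ℝ) • 1) ▸
      Matrix.PosSemidef.zero⟩
  obtain ⟨i0, -, hi0⟩ := Finset.exists_min_image Finset.univ hW.1.eigenvalues
    ⟨Classical.arbitrary _, Finset.mem_univ _⟩
  set ε := hW.1.eigenvalues i0 with hε
  refine ⟨ε, hW.eigenvalues_pos i0, ?_⟩
  have hU := (Matrix.mem_unitaryGroup_iff).mp (hW.1.eigenvectorUnitary).2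
  set U : Matrix (Fin n) (Fin n) ℝ := (hW.1.eigenvectorUnitary : Matrix (Fin n) (Fin n) ℝ) with hUdef
  have key : W - ε • 1 = U * (Matrix.diagonal (fun i => hW.1.eigenvalues i - ε)) * star U := by
    have hsub : Matrix.diagonal (fun i => hW.1.eigenvalues i - ε)
        = Matrix.diagonal (RCLike.ofReal ∘ hW.1.eigenvalues) - ε • 1 := by
      simp [Matrix.diagonal_sub, Matrix.smul_one_eq_diagonal, Matrix.diagonal_sub]
    rw [hsub, Matrix.mul_sub, Matrix.sub_mul]
    have : U * (ε • (1 : Matrix (Fin n) (Fin n) ℝ)) * star U = ε • 1 := by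
      rw [Matrix.mul_smul, Matrix.mul_one, Matrix.smul_mul, hU]
    rw [this]
    congr 1
    exact hW.1.spectral_theorem
  rw [key, Matrix.star_eq_conjTranspose]
  exact (Matrix.PosSemidef.diagonal (fun i => sub_nonneg.mpr (hi0 i (Finset.mem_univ i)))
    ).mul_mul_conjTranspose_same U

lemma trace_W_ge {W S : Matrix (Fin n) (Fin n) ℝ} {ε : ℝ} (hS : S.PosSemidef)
    (hWe : (W - ε • 1).PosSemidef) : ε * S.trace ≤ (W * S).trace := by
  have h := psd_trace_mul_nonneg hWe hS
  rw [Matrix.sub_mul, Matrix.trace_sub, Matrix.smul_mul, Matrix.one_mul, Matrix.trace_smul] at h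
  simpa [smul_eq_mul] using sub_nonneg.mp h

lemma det_conj_unitary {U : Matrix (Fin n) (Fin n) ℝ} (hU : U * star U = 1)
    (M : Matrix (Fin n) (Fin n) ℝ) : (U * M * star U).det = M.det := by
  have h1 : U.det * (star U).det = 1 := by rw [← Matrix.det_mul, hU, Matrix.det_one]
  rw [Matrix.det_mul, Matrix.det_mul]
  calc U.det * M.det * (star U).det = U.det * (star U).det * M.det := by ring
  _ = M.det := by rw [h1, one_mul]

lemma herm_det_one_add {C : Matrix (Fin n) (Fin n) ℝ} (hC : C.IsHermitian) :
    (1 + C).det = ∏ i, (1 + hC.eigenvalues i) := by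
  have hU := (Matrix.mem_unitaryGroup_iff).mp (hC.eigenvectorUnitary).2
  set U : Matrix (Fin n) (Fin n) ℝ := (hC.eigenvectorUnitary : Matrix (Fin n) (Fin n) ℝ)
  have key : 1 + C = U * (Matrix.diagonal (fun i => 1 + hC.eigenvalues i)) * star U := by
    have hsub : Matrix.diagonal (fun i => 1 + hC.eigenvalues i)
        = 1 + Matrix.diagonal (RCLike.ofReal ∘ hC.eigenvalues) := by
      simp [Matrix.diagonal_add, ← Matrix.diagonal_one]
    rw [hsub, Matrix.mul_add, Matrix.add_mul, Matrix.mul_one, hU]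
    congr 1
    exact hC.spectral_theorem
  rw [key, det_conj_unitary hU, Matrix.det_diagonal]

lemma herm_eq_one_of_eigen_one {C : Matrix (Fin n) (Fin n) ℝ} (hC : C.IsHermitian)
    (h : ∀ i, hC.eigenvalues i = 1) : C = 1 := by
  have hU := (Matrix.mem_unitaryGroup_iff).mp (hC.eigenvectorUnitary).2
  have : Matrix.diagonal (RCLike.ofReal ∘ hC.eigenvalues) = (1 : Matrix (Fin n) (Fin n) ℝ) := by
    have h2 : RCLike.ofReal ∘ hC.eigenvalues = fun _ : Fin n => (1 : ℝ) :=
      funext fun i => by simp [h i]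
    rw [h2, Matrix.diagonal_one]
  calc C = _ := hC.spectral_theorem
  _ = 1 := by rw [this, Unitary.conjStarAlgAut_apply, Matrix.mul_one, hU]

lemma psd_det_nonneg {A : Matrix (Fin n) (Fin n) ℝ} (hA : A.PosSemidef) : 0 ≤ A.det := by
  rw [hA.1.det_eq_prod_eigenvalues]
  exact Finset.prod_nonneg fun i _ => by simpa using hA.eigenvalues_nonneg i

open scoped MatrixOrder in
lemma logdet_midpoint_strict {A B : Matrix (Fin n) (Fin n) ℝ} (hA : A.PosDef) (hB : B.PosDef)
    (hne : A ≠ B) :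
    Real.log A.det / 2 + Real.log B.det / 2
      < Real.log ((2⁻¹ : ℝ) • A + (2⁻¹ : ℝ) • B).det := by
  set S := CFC.sqrt A with hSdef
  have hSpsd : S.PosSemidef := (CFC.sqrt_nonneg A).posSemidef
  have hSS : S * S = A := CFC.sqrt_mul_sqrt_self A hA.posSemidef.nonneg
  have hdetSS : S.det * S.det = A.det := by rw [← Matrix.det_mul, hSS]
  have hdetS : 0 < S.det := by
    have h0 := psd_det_nonneg hSpsd
    nlinarith [hA.det_pos]
  have hSunit : IsUnit S.det := hdetS.ne'.isUnit
  have hSinv : S * S⁻¹ = 1 := Matrix.mul_nonsing_inv S hSunit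
  have hSinv' : S⁻¹ * S = 1 := Matrix.nonsing_inv_mul S hSunit
  have hSinvh : (S⁻¹).IsHermitian := hSpsd.1.inv
  set C := S⁻¹ * B * S⁻¹ with hCdef
  have hCpsd : C.PosSemidef := by
    have h := hB.posSemidef.conjTranspose_mul_mul_same (S⁻¹)
    rwa [hSinvh.eq] at h
  have hSCS : S * C * S = B := by
    rw [hCdef]
    simp only [Matrix.mul_assoc]
    rw [hSinv', Matrix.mul_one, ← Matrix.mul_assoc, hSinv, Matrix.one_mul]
  have hdetSinv : (S⁻¹).det = (S.det)⁻¹ := by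
    rw [Matrix.det_nonsing_inv, Ring.inverse_eq_inv']
  have hdetC : 0 < C.det := by
    rw [hCdef, Matrix.det_mul, Matrix.det_mul, hdetSinv]
    have := hB.det_pos
    positivity
  have hCpd : C.PosDef := posDef_of_det_pos hCpsd hdetC
  set μ : Fin n → ℝ := hCpsd.1.eigenvalues with hμdef
  have hμpos : ∀ i, 0 < μ i := fun i => hCpd.eigenvalues_pos i
  have hdetCprod : C.det = ∏ i, μ i := by
    rw [hCpsd.1.det_eq_prod_eigenvalues]
    simp [hμdef]
  have hmidC : S * (1 + C) * S = A + B := by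
    rw [Matrix.mul_add, Matrix.mul_one, Matrix.add_mul, hSS, hSCS]
  have hmid : (2⁻¹ : ℝ) • A + (2⁻¹ : ℝ) • B = S * ((2⁻¹ : ℝ) • (1 + C)) * S := by
    rw [Matrix.mul_smul, Matrix.smul_mul, hmidC, smul_add]
  have hdet_mid : ((2⁻¹ : ℝ) • A + (2⁻¹ : ℝ) • B).det = A.det * ∏ i, (2⁻¹ * (1 + μ i)) := by
    rw [hmid, Matrix.det_mul, Matrix.det_mul, Matrix.det_smul, herm_det_one_add hCpsd.1,
      Finset.prod_mul_distrib, Finset.prod_const, Fintype.card_fin, ← hdetSS]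
    simp only [Finset.card_univ, Fintype.card_fin]
    ring
  have hdetB : B.det = A.det * ∏ i, μ i := by
    rw [← hSCS, Matrix.det_mul, Matrix.det_mul, ← hdetCprod, ← hdetSS]
    ring
  have hex : ∃ i, μ i ≠ 1 := by
    by_contra hcon
    push_neg at hcon
    have hC1 : C = 1 := herm_eq_one_of_eigen_one hCpsd.1 hcon
    exact hne (by rw [← hSCS, hC1, Matrix.mul_one, hSS])
  have hterm : ∀ i, Real.log (μ i) ≤ 2 * Real.log (2⁻¹ * (1 + μ i)) := by
    intro i
    have hp := hμpos i
    have hsq : μ i ≤ (2⁻¹ * (1 + μ i)) ^ 2 := by nlinarith [sq_nonneg (μ i - 1)]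
    calc Real.log (μ i) ≤ Real.log ((2⁻¹ * (1 + μ i)) ^ 2) := Real.log_le_log hp hsq
    _ = 2 * Real.log (2⁻¹ * (1 + μ i)) := by rw [Real.log_pow]; push_cast; ring
  have htermlt : ∀ i, μ i ≠ 1 → Real.log (μ i) < 2 * Real.log (2⁻¹ * (1 + μ i)) := by
    intro i hi
    have hp := hμpos i
    have hsq : μ i < (2⁻¹ * (1 + μ i)) ^ 2 := by
      have h0 : (0:ℝ) < (μ i - 1) ^ 2 := sq_pos_of_ne_zero (sub_ne_zero.mpr hi)
      nlinarith
    calc Real.log (μ i) < Real.log ((2⁻¹ * (1 + μ i)) ^ 2) := Real.log_lt_log hp hsq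
    _ = 2 * Real.log (2⁻¹ * (1 + μ i)) := by rw [Real.log_pow]; push_cast; ring
  have hsum : ∑ i, Real.log (μ i) < ∑ i, 2 * Real.log (2⁻¹ * (1 + μ i)) := by
    obtain ⟨i0, hi0⟩ := hex
    exact Finset.sum_lt_sum (fun i _ => hterm i) ⟨i0, Finset.mem_univ i0, htermlt i0 hi0⟩
  have hlogmid : Real.log ((2⁻¹ : ℝ) • A + (2⁻¹ : ℝ) • B).det
      = Real.log A.det + ∑ i, Real.log (2⁻¹ * (1 + μ i)) := by
    rw [hdet_mid, Real.log_mul hA.det_pos.ne' (Finset.prod_pos (fun i _ => by have := hμpos i; positivity) : (0:ℝ) < ∏ i, (2⁻¹ * (1 + μ i))).ne',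
      Real.log_prod]
    intro i _
    have := hμpos i
    positivity
  have hlogB : Real.log B.det = Real.log A.det + ∑ i, Real.log (μ i) := by
    rw [hdetB, Real.log_mul hA.det_pos.ne' (Finset.prod_pos (fun i _ => hμpos i) : (0:ℝ) < ∏ i, μ i).ne',
      Real.log_prod]
    intro i _
    exact (hμpos i).ne'
  rw [hlogmid, hlogB]
  have h2 : ∑ i, 2 * Real.log (2⁻¹ * (1 + μ i)) = 2 * ∑ i, Real.log (2⁻¹ * (1 + μ i)) := by
    rw [Finset.mul_sum]
  linarith [hsum, h2.symm.le]

lemma posDef_midpoint {A B : Matrix (Fin n) (Fin n) ℝ} (hA : A.PosDef) (hB : B.PosDef) :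
    ((2⁻¹ : ℝ) • A + (2⁻¹ : ℝ) • B).PosDef := by
  refine posDef_iff_dotProduct_mulVec.mpr ⟨?_, ?_⟩
  · show _ᴴ = _
    rw [Matrix.conjTranspose_add, Matrix.conjTranspose_smul, Matrix.conjTranspose_smul,
      hA.1.eq, hB.1.eq, star_trivial]
  · intro x hx
    have h1 := hA.dotProduct_mulVec_pos hx
    have h2 := hB.dotProduct_mulVec_pos hx
    simp only [Matrix.add_mulVec, Matrix.smul_mulVec, dotProduct_add, dotProduct_smul,
      smul_eq_mul] at *
    nlinarith

attribute [local instance] Matrix.normedAddCommGroup Matrix.normedSpace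

example : True := trivial

lemma isClosed_psd : IsClosed {M : Matrix (Fin n) (Fin n) ℝ | M.PosSemidef} := by
  have heq : {M : Matrix (Fin n) (Fin n) ℝ | M.PosSemidef}
      = {M : Matrix (Fin n) (Fin n) ℝ | Mᴴ = M}
        ∩ ⋂ x : Fin n → ℝ, {M | 0 ≤ star x ⬝ᵥ M *ᵥ x} := by
    ext M
    simp only [Set.mem_setOf_eq, Set.mem_inter_iff, Set.mem_iInter]
    exact posSemidef_iff_dotProduct_mulVec
  rw [heq]
  refine IsClosed.inter (isClosed_eq (continuous_id.matrix_conjTranspose) continuous_id) ?_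
  refine isClosed_iInter fun x => ?_
  exact isClosed_le continuous_const
    (continuous_const.dotProduct (continuous_id.matrix_mulVec continuous_const))


/-- Let `L` be a linear subspace of the symmetric `n × n` matrices meeting the positive
definite cone, and let `W` be positive definite.  Then the dual log-likelihood
`ℓ∨(Σ) = log det Σ − tr(WΣ)` has a unique maximizer over `L ∩ S^n_+`: there is a unique
positive definite `Σ̂ ∈ L` such that `ℓ∨(Σ) < ℓ∨(Σ̂)` for every positive definite
`Σ ∈ L` with `Σ ≠ Σ̂`. -/
theorem dual_likelihood_unique_max_on_model
    (n : ℕ) (L : Submodule ℝ (Matrix (Fin n) (Fin n) ℝ))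
    (hL : ∀ A ∈ L, A.IsSymm)
    (hLpos : ∃ A ∈ L, A.PosDef)
    (W : Matrix (Fin n) (Fin n) ℝ) (hW : W.PosDef) :
    ∃! Shat : Matrix (Fin n) (Fin n) ℝ,
      Shat ∈ L ∧ Shat.PosDef ∧
        ∀ Sig ∈ L, Sig.PosDef → Sig ≠ Shat →
          Real.log Sig.det - (W * Sig).trace
            < Real.log Shat.det - (W * Shat).trace := by
  classical
  obtain ⟨A₀, hA₀L, hA₀pd⟩ := hLpos
  obtain ⟨ε, hε, hWε⟩ := exists_eps hW
  set f : Matrix (Fin n) (Fin n) ℝ → ℝ := fun M => Real.log M.det - (W * M).trace with hf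
  set g : Matrix (Fin n) (Fin n) ℝ → ℝ := fun M => M.det * Real.exp (-(W * M).trace) with hg
  have hgcont : Continuous g := (continuous_id.matrix_det).mul
    (((continuous_const.matrix_mul continuous_id).matrix_trace).neg.rexp)
  have hgf : ∀ M : Matrix (Fin n) (Fin n) ℝ, M.PosDef → g M = Real.exp (f M) := by
    intro M hM
    show M.det * Real.exp (-(W * M).trace) = Real.exp (Real.log M.det - (W * M).trace)
    rw [Real.exp_sub, Real.exp_log hM.det_pos]
    rw [Real.exp_neg]
    field_simp
  set m := f A₀ with hm
  set em := Real.exp m with hem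
  have hempos : 0 < em := Real.exp_pos m
  have htend : Filter.Tendsto (fun t : ℝ => (t * ε⁻¹) ^ n * Real.exp (-t))
      Filter.atTop (nhds 0) := by
    have h1 : (fun t : ℝ => (t * ε⁻¹) ^ n * Real.exp (-t))
        = fun t : ℝ => ε⁻¹ ^ n * (t ^ n * Real.exp (-t)) := by
      funext t; rw [mul_pow]; ring
    rw [h1]
    simpa using (Real.tendsto_pow_mul_exp_neg_atTop_nhds_zero n).const_mul (ε⁻¹ ^ n)
  obtain ⟨R₀, hR₀⟩ := Filter.eventually_atTop.mp (htend.eventually_lt_const hempos)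
  set R := max R₀ ((W * A₀).trace) with hR
  have hbound : ∀ M : Matrix (Fin n) (Fin n) ℝ, M.PosSemidef → em ≤ g M →
      (W * M).trace ≤ R := by
    intro M hM hgM
    by_contra hcon
    push_neg at hcon
    have htr : ε * M.trace ≤ (W * M).trace := trace_W_ge hM hWε
    have htrn : 0 ≤ M.trace := psd_trace_nonneg hM
    have hdetle : M.det ≤ ((W * M).trace * ε⁻¹) ^ n := by
      calc M.det ≤ M.trace ^ n := psd_det_le hM
      _ ≤ ((W * M).trace * ε⁻¹) ^ n := by
        apply pow_le_pow_left₀ htrn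
        have h2 : M.trace ≤ (W * M).trace / ε := (le_div_iff₀ hε).mpr (by linarith)
        simpa [div_eq_mul_inv] using h2
    have hglt : g M ≤ ((W * M).trace * ε⁻¹) ^ n * Real.exp (-(W * M).trace) :=
      mul_le_mul_of_nonneg_right hdetle (Real.exp_pos _).le
    have hlt : ((W * M).trace * ε⁻¹) ^ n * Real.exp (-(W * M).trace) < em :=
      hR₀ _ (le_trans (le_max_left _ _) hcon.le)
    linarith
  set K : Set (Matrix (Fin n) (Fin n) ℝ) :=
    (L : Set (Matrix (Fin n) (Fin n) ℝ)) ∩ ({M | M.PosSemidef} ∩ {M | em ≤ g M}) with hK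
  have hA₀K : A₀ ∈ K := ⟨hA₀L, hA₀pd.posSemidef, le_of_eq (hgf A₀ hA₀pd).symm⟩
  have hKclosed : IsClosed K :=
    (Submodule.closed_of_finiteDimensional L).inter
      (isClosed_psd.inter (isClosed_le continuous_const hgcont))
  have hKbdd : Bornology.IsBounded K := by
    rw [isBounded_iff_forall_norm_le]
    refine ⟨R / ε, ?_⟩
    rintro M ⟨hML, hMpsd, hMg⟩
    have ht : (W * M).trace ≤ R := hbound M hMpsd hMg
    have htrW := trace_W_ge hMpsd hWε
    have htr : M.trace ≤ R / ε := (le_div_iff₀ hε).mpr (by linarith)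
    have hR0 : (0 : ℝ) ≤ R / ε := le_trans (psd_trace_nonneg hMpsd) htr
    rw [Matrix.norm_le_iff hR0]
    intro i j
    rw [Real.norm_eq_abs]
    exact le_trans (psd_entry_le_trace hMpsd i j) htr
  have hKcpt : IsCompact K := Metric.isCompact_of_isClosed_isBounded hKclosed hKbdd
  obtain ⟨Shat, hSK, hSmax⟩ := hKcpt.exists_isMaxOn ⟨A₀, hA₀K⟩ hgcont.continuousOn
  obtain ⟨hSL, hSpsd, hSg⟩ := hSK
  have hSpd : Shat.PosDef := by
    apply posDef_of_det_pos hSpsd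
    have h : em ≤ Shat.det * Real.exp (-(W * Shat).trace) := hSg
    nlinarith [Real.exp_pos (-(W * Shat).trace), hempos]
  have hweak : ∀ M, M ∈ L → M.PosDef → f M ≤ f Shat := by
    intro M hML hMpd
    by_cases hcase : em ≤ g M
    · have hMK : M ∈ K := ⟨hML, hMpd.posSemidef, hcase⟩
      have h := hSmax hMK
      simp only [Set.mem_setOf_eq] at h
      rw [hgf M hMpd, hgf Shat hSpd] at h
      exact Real.exp_le_exp.mp h
    · push_neg at hcase
      have h1 : g M < g Shat := lt_of_lt_of_le hcase hSg
      rw [hgf M hMpd, hgf Shat hSpd] at h1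
      exact (Real.exp_lt_exp.mp h1).le
  have hstrict : ∀ Sig ∈ L, Sig.PosDef → Sig ≠ Shat → f Sig < f Shat := by
    intro Sig hSigL hSigpd hne
    rcases lt_or_ge (f Sig) (f Shat) with h | h
    · exact h
    · exfalso
      have heq : f Sig = f Shat := le_antisymm (hweak Sig hSigL hSigpd) h
      set Mid := (2⁻¹ : ℝ) • Sig + (2⁻¹ : ℝ) • Shat with hMid
      have hMidL : Mid ∈ L := L.add_mem (L.smul_mem _ hSigL) (L.smul_mem _ hSL)
      have hMidpd := posDef_midpoint hSigpd hSpd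
      have htraceMid : (W * Mid).trace
          = 2⁻¹ * (W * Sig).trace + 2⁻¹ * (W * Shat).trace := by
        rw [hMid, Matrix.mul_add, Matrix.mul_smul, Matrix.mul_smul, Matrix.trace_add,
          Matrix.trace_smul, Matrix.trace_smul]
        simp [smul_eq_mul]
      have hlog := logdet_midpoint_strict hSigpd hSpd hne
      rw [← hMid] at hlog
      have e1 : f Sig = Real.log Sig.det - (W * Sig).trace := rfl
      have e2 : f Shat = Real.log Shat.det - (W * Shat).trace := rfl
      have e3 : f Mid = Real.log Mid.det - (W * Mid).trace := rfl
      have hwk := hweak Mid hMidL hMidpd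
      rw [e3, htraceMid] at hwk
      linarith
  refine ⟨Shat, ⟨hSL, hSpd, fun Sig hSigL hSigpd hne => hstrict Sig hSigL hSigpd hne⟩, ?_⟩
  rintro y ⟨hyL, hypd, hy⟩
  by_contra hne
  have h1 := hy Shat hSL hSpd (fun h => hne h.symm)
  have h2 := hstrict y hyL hypd hne
  have e1 : f y = Real.log y.det - (W * y).trace := rfl
  have e2 : f Shat = Real.log Shat.det - (W * Shat).trace := rfl
  rw [e1, e2] at h2
  linarith
end

section
/- Let C be a hierarchy on {1,…,n}, and for indices i, j let lca(i,j) denote the smallest member of C containing both i and j. Then the linear span in S^n of the rank-one matrices e_A e_Aᵀ, A ∈ C, equals the set of all real symmetric n×n matrices Σ = (σ_{ij}) such that σ_{ij} = σ_{kl} whenever lca(i,j) = lca(k,l). -/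
open Matrix

attribute [local instance] Classical.propDecidable

noncomputable def vval (n : ℕ) (lca : Fin n → Fin n → Set (Fin n))
    (Sig : Matrix (Fin n) (Fin n) ℝ) (A : Set (Fin n)) : ℝ :=
  if h : ∃ p : Fin n × Fin n, lca p.1 p.2 = A then Sig h.choose.1 h.choose.2 else 0

noncomputable def cval (n : ℕ) (lca : Fin n → Fin n → Set (Fin n))
    (Sig : Matrix (Fin n) (Fin n) ℝ) (par : Set (Fin n) → Set (Fin n))
    (A : Set (Fin n)) : ℝ :=
  if A = Set.univ then vval n lca Sig A else vval n lca Sig A - vval n lca Sig (par A)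

lemma vval_eq (n : ℕ) (lca : Fin n → Fin n → Set (Fin n))
    (Sig : Matrix (Fin n) (Fin n) ℝ)
    (hc : ∀ i j p q : Fin n, lca i j = lca p q → Sig i j = Sig p q)
    (i j : Fin n) : vval n lca Sig (lca i j) = Sig i j := by
  have h : ∃ p : Fin n × Fin n, lca p.1 p.2 = lca i j := ⟨(i, j), rfl⟩
  rw [vval, dif_pos h]
  exact hc _ _ _ _ h.choose_spec

lemma telescope (n : ℕ) (lca : Fin n → Fin n → Set (Fin n))
    (Sig : Matrix (Fin n) (Fin n) ℝ) (par : Set (Fin n) → Set (Fin n)) :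
    ∀ (k : ℕ) (S : Finset (Set (Fin n))) (L : Set (Fin n)), S.card = k →
      L ∈ S → (∀ A ∈ S, L ⊆ A) → Set.univ ∈ S →
      (∀ A ∈ S, A ≠ Set.univ → par A ∈ S ∧ A ⊂ par A ∧ ∀ B ∈ S, A ⊂ B → par A ⊆ B) →
      ∑ A ∈ S, cval n lca Sig par A = vval n lca Sig L := by
  intro k
  induction k using Nat.strong_induction_on with
  | _ k ih =>
    intro S L hcard hLS hLmin huniv hclose
    by_cases hLu : L = Set.univ
    · have hS : S = {Set.univ} := by
        apply Finset.eq_singleton_iff_unique_mem.mpr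
        refine ⟨huniv, fun A hA => ?_⟩
        exact (Set.univ_subset_iff.mp (hLu ▸ hLmin A hA))
      rw [hS, Finset.sum_singleton, cval, if_pos rfl, hLu]
    · obtain ⟨hpLS, hLp, hpmin⟩ := hclose L hLS hLu
      have hpneL : par L ≠ L := fun h => (ne_of_ssubset hLp) h.symm
      have hLerase : ∑ A ∈ S.erase L, cval n lca Sig par A = vval n lca Sig (par L) := by
        apply ih (S.erase L).card ?_ (S.erase L) (par L) rfl
        · exact Finset.mem_erase.mpr ⟨hpneL, hpLS⟩
        · intro A hA
          obtain ⟨hAL, hAS⟩ := Finset.mem_erase.mp hA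
          exact hpmin A hAS (ssubset_of_subset_of_ne (hLmin A hAS) (Ne.symm hAL))
        · exact Finset.mem_erase.mpr ⟨fun h => hLu h.symm, huniv⟩
        · intro A hA hAu
          obtain ⟨hAL, hAS⟩ := Finset.mem_erase.mp hA
          obtain ⟨h1, h2, h3⟩ := hclose A hAS hAu
          refine ⟨Finset.mem_erase.mpr ⟨?_, h1⟩, h2, fun B hB hAB => h3 B (Finset.mem_erase.mp hB).2 hAB⟩
          intro h
          exact (ne_of_ssubset (lt_of_le_of_lt (hLmin A hAS) h2)) h.symm
        · rw [← hcard]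
          exact Finset.card_erase_lt_of_mem hLS
      rw [← Finset.add_sum_erase S _ hLS, hLerase, cval, if_neg hLu]
      ring

/-- Let `C` be a hierarchy (laminar family containing the ground set and all singletons)
on `{1,…,n}` and let `lca i j` be the smallest member of `C` containing `i` and `j`.
Then the linear span of the rank-one matrices `e_A e_Aᵀ`, `A ∈ C`, equals the set of all
symmetric matrices `Σ` with `Σ i j = Σ p q` whenever `lca i j = lca p q`. -/
theorem brownian_tree_span_eq
    (n : ℕ) (hn : 1 ≤ n)
    (C : Set (Set (Fin n)))
    (hne : ∀ A ∈ C, A.Nonempty)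
    (huniv : Set.univ ∈ C)
    (hsingle : ∀ i : Fin n, {i} ∈ C)
    (hlaminar : ∀ A ∈ C, ∀ B ∈ C, A ⊆ B ∨ B ⊆ A ∨ Disjoint A B)
    (lca : Fin n → Fin n → Set (Fin n))
    (hlca : ∀ i j : Fin n, lca i j ∈ C ∧ i ∈ lca i j ∧ j ∈ lca i j ∧
      ∀ D ∈ C, i ∈ D → j ∈ D → lca i j ⊆ D) :
    (Submodule.span ℝ
        {M : Matrix (Fin n) (Fin n) ℝ | ∃ A ∈ C,
          M = Matrix.vecMulVec (A.indicator fun _ => (1 : ℝ))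
                (A.indicator fun _ => (1 : ℝ))} : Set (Matrix (Fin n) (Fin n) ℝ))
      = {Sig : Matrix (Fin n) (Fin n) ℝ | Sig.IsSymm ∧
          ∀ i j p q : Fin n, lca i j = lca p q → Sig i j = Sig p q} := by
  classical
  have hmem : ∀ (i j : Fin n) (A : Set (Fin n)), A ∈ C →
      ((i ∈ A ∧ j ∈ A) ↔ lca i j ⊆ A) := by
    intro i j A hA
    obtain ⟨hlC, hi, hj, hmin⟩ := hlca i j
    exact ⟨fun ⟨h1, h2⟩ => hmin A hA h1 h2, fun h => ⟨h hi, h hj⟩⟩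
  have egen : ∀ A ∈ C, ∀ i j : Fin n,
      Matrix.vecMulVec (A.indicator fun _ => (1 : ℝ)) (A.indicator fun _ => (1 : ℝ)) i j
        = if lca i j ⊆ A then (1 : ℝ) else 0 := by
    intro A hA i j
    rw [Matrix.vecMulVec_apply, Set.indicator_apply, Set.indicator_apply]
    by_cases h1 : lca i j ⊆ A
    · obtain ⟨h2, h3⟩ := (hmem i j A hA).mpr h1
      simp [h1, h2, h3]
    · have h2 : ¬(i ∈ A ∧ j ∈ A) := fun hh => h1 ((hmem i j A hA).mp hh)
      rcases not_and_or.mp h2 with h3 | h3 <;> simp [h1, h3]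
  apply Set.Subset.antisymm
  · -- span ⊆ RHS
    let T : Submodule ℝ (Matrix (Fin n) (Fin n) ℝ) :=
      { carrier := {Sig : Matrix (Fin n) (Fin n) ℝ | Sig.IsSymm ∧
          ∀ i j p q : Fin n, lca i j = lca p q → Sig i j = Sig p q}
        add_mem' := by
          rintro a b ⟨ha1, ha2⟩ ⟨hb1, hb2⟩
          refine ⟨ha1.add hb1, fun i j p q h => ?_⟩
          simp only [Matrix.add_apply, ha2 i j p q h, hb2 i j p q h]
        zero_mem' := by
          refine ⟨?_, fun i j p q h => rfl⟩
          simp [Matrix.IsSymm]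
        smul_mem' := by
          rintro c a ⟨ha1, ha2⟩
          refine ⟨?_, fun i j p q h => ?_⟩
          · show (c • a)ᵀ = c • a
            rw [Matrix.transpose_smul, ha1]
          · simp only [Matrix.smul_apply, ha2 i j p q h] }
    have hle : Submodule.span ℝ
        {M : Matrix (Fin n) (Fin n) ℝ | ∃ A ∈ C,
          M = Matrix.vecMulVec (A.indicator fun _ => (1 : ℝ))
                (A.indicator fun _ => (1 : ℝ))} ≤ T := by
      apply Submodule.span_le.mpr
      rintro M ⟨A, hA, rfl⟩
      refine ⟨?_, fun i j p q h => ?_⟩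
      · show (Matrix.vecMulVec _ _)ᵀ = _
        ext i j
        simp only [Matrix.transpose_apply, Matrix.vecMulVec_apply]
        ring
      · rw [egen A hA i j, egen A hA p q, h]
    exact fun x hx => hle hx
  · rintro Sig ⟨hsym, hc⟩
    -- construct the parent function
    have hpar : ∀ A : Set (Fin n), ∃ B : Set (Fin n),
        A ∈ C → A ≠ Set.univ → B ∈ C ∧ A ⊂ B ∧ ∀ D ∈ C, A ⊂ D → B ⊆ D := by
      intro A
      by_cases h : A ∈ C ∧ A ≠ Set.univ
      · obtain ⟨hAC, hAu⟩ := h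
        set s : Finset (Set (Fin n)) :=
          (Set.toFinite C).toFinset.filter (fun B => A ⊂ B) with hs
        have hmemS : ∀ B, B ∈ s ↔ B ∈ C ∧ A ⊂ B := by
          intro B
          rw [hs, Finset.mem_filter, Set.Finite.mem_toFinset]
        have hsne : s.Nonempty :=
          ⟨Set.univ, (hmemS _).mpr ⟨huniv, Set.ssubset_univ_iff.mpr hAu⟩⟩
        obtain ⟨m, hm, hmmin⟩ : ∃ m ∈ s, ∀ x ∈ s, ¬ x < m := by
          obtain ⟨m, hm⟩ := Finset.exists_minimal hsne
          exact ⟨m, hm.1, fun x hx hlt => hlt.not_ge (hm.2 hx hlt.le)⟩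
        obtain ⟨hmC, hAm⟩ := (hmemS m).mp hm
        refine ⟨m, fun _ _ => ⟨hmC, hAm, fun D hD hAD => ?_⟩⟩
        have hDs : D ∈ s := (hmemS D).mpr ⟨hD, hAD⟩
        obtain ⟨x, hx⟩ := hne A hAC
        rcases hlaminar m hmC D hD with h1 | h1 | h1
        · exact h1
        · rcases lt_or_eq_of_le h1 with h2 | h2
          · exact absurd h2 (hmmin D hDs)
          · exact h2.symm.subset
        · exact absurd (Set.disjoint_left.mp h1 (hAm.subset hx) (hAD.subset hx)) (fun hf => hf)
      · exact ⟨A, fun h1 h2 => absurd ⟨h1, h2⟩ h⟩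
    choose par hparspec using hpar
    set 𝒞 : Finset (Set (Fin n)) := (Set.toFinite C).toFinset with h𝒞
    have hmem𝒞 : ∀ A, A ∈ 𝒞 ↔ A ∈ C := by
      intro A; rw [h𝒞, Set.Finite.mem_toFinset]
    have hSig : Sig = ∑ A ∈ 𝒞, cval n lca Sig par A •
        Matrix.vecMulVec (A.indicator fun _ => (1 : ℝ)) (A.indicator fun _ => (1 : ℝ)) := by
      ext i j
      rw [Matrix.sum_apply]
      have hterm : ∀ A ∈ 𝒞, (cval n lca Sig par A •
          Matrix.vecMulVec (A.indicator fun _ => (1 : ℝ)) (A.indicator fun _ => (1 : ℝ))) i j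
          = if lca i j ⊆ A then cval n lca Sig par A else 0 := by
        intro A hA
        rw [Matrix.smul_apply, egen A ((hmem𝒞 A).mp hA) i j]
        simp [mul_ite]
      rw [Finset.sum_congr rfl hterm, ← Finset.sum_filter]
      have htel := telescope n lca Sig par (𝒞.filter fun A => lca i j ⊆ A).card
        (𝒞.filter fun A => lca i j ⊆ A) (lca i j) rfl ?_ ?_ ?_ ?_
      · rw [htel, vval_eq n lca Sig hc i j]
      · exact Finset.mem_filter.mpr ⟨(hmem𝒞 _).mpr (hlca i j).1, subset_rfl⟩
      · exact fun A hA => (Finset.mem_filter.mp hA).2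
      · exact Finset.mem_filter.mpr ⟨(hmem𝒞 _).mpr huniv, Set.subset_univ _⟩
      · intro A hA hAu
        obtain ⟨hA𝒞, hLA⟩ := Finset.mem_filter.mp hA
        obtain ⟨h1, h2, h3⟩ := hparspec A ((hmem𝒞 A).mp hA𝒞) hAu
        refine ⟨Finset.mem_filter.mpr ⟨(hmem𝒞 _).mpr h1, hLA.trans h2.subset⟩, h2,
          fun B hB hAB => h3 B ((hmem𝒞 B).mp (Finset.mem_filter.mp hB).1) hAB⟩
    rw [hSig]
    exact Submodule.sum_mem _ fun A hA => Submodule.smul_mem _ _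
      (Submodule.subset_span ⟨A, (hmem𝒞 A).mp hA, rfl⟩)
end

section
/- Let n ≥ 3 and let W = (w_{ij}) be a positive definite real symmetric n×n matrix. Let R = {3,…,n}, let W_{R,R} denote the principal submatrix of W on rows and columns in R, let W_{1,R} be the row vector (w_{1j})_{j∈R} and W_{R,2} the column vector (w_{i2})_{i∈R}. Define the symmetric matrix Ǩ by ǩ_{ij} = w_{ij} for all (i,j) with {i,j} ≠ {1,2}, and ǩ_{12} = ǩ_{21} = W_{1,R}·W_{R,R}⁻¹·W_{R,2}. Then Ǩ is positive definite and its inverse satisfies (Ǩ⁻¹)_{12} = 0. In particular, Ǩ is the dual maximum likelihood estimate of the concentration matrix for the linear covariance model L = {Σ ∈ S^n : σ_{12} = 0}, and the dual ML degree of this model is one. -/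
open Matrix

/-- The dual MLE for the model `σ₁₂ = 0`: it agrees with `W` in all entries except the
`(1,2)` and `(2,1)` entries, which are replaced by `W_{1,R} W_{R,R}⁻¹ W_{R,2}` where
`R = {3,…,n}` (here the first two indices of `Fin (n+3)` play the role of `1, 2`). -/
noncomputable def dualMLEonePair (n : ℕ) (W : Matrix (Fin (n + 3)) (Fin (n + 3)) ℝ) :
    Matrix (Fin (n + 3)) (Fin (n + 3)) ℝ :=
  let Wrr : Matrix {i : Fin (n + 3) // i ≠ 0 ∧ i ≠ 1}
      {i : Fin (n + 3) // i ≠ 0 ∧ i ≠ 1} ℝ :=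
    Matrix.of fun a b => W a.1 b.1
  let k12 : ℝ := ∑ a : {i : Fin (n + 3) // i ≠ 0 ∧ i ≠ 1},
    ∑ b : {i : Fin (n + 3) // i ≠ 0 ∧ i ≠ 1}, W 0 a.1 * Wrr⁻¹ a b * W b.1 1
  Matrix.of fun i j =>
    if (i = 0 ∧ j = 1) ∨ (i = 1 ∧ j = 0) then k12 else W i j

lemma posDef_submatrix_equiv' {m n : Type*} [Fintype m] [Fintype n]
    {M : Matrix n n ℝ} (hM : M.PosDef) (e : m ≃ n) :
    (M.submatrix e e).PosDef := by
  refine posDef_iff_dotProduct_mulVec.mpr ⟨(isHermitian_submatrix_equiv e).2 hM.1, fun x hx => ?_⟩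
  have hy : (x ∘ e.symm) ≠ 0 := by
    intro h
    apply hx
    funext i
    simpa using congrFun h (e i)
  have hpos := hM.dotProduct_mulVec_pos hy
  rw [Matrix.submatrix_mulVec_equiv]
  have key : dotProduct (star x) ((M *ᵥ (x ∘ e.symm)) ∘ ⇑e)
      = dotProduct (star (x ∘ e.symm)) (M *ᵥ (x ∘ e.symm)) := by
    simp only [dotProduct, Function.comp_apply, Pi.star_apply]
    exact Fintype.sum_equiv e _ _ (fun i => by simp)
  rw [key]
  exact hpos


lemma blockMagic {p q : Type*} [Fintype p] [DecidableEq p] [Fintype q] [DecidableEq q]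
    (A Aw : Matrix p p ℝ) (B : Matrix p q ℝ) (D : Matrix q q ℝ)
    (hMw : (fromBlocks Aw B Bᴴ D).PosDef)
    (hA : A.IsHermitian)
    (hoff : ∀ i j, i ≠ j → (A - B * D⁻¹ * Bᴴ) i j = 0)
    (hdiag : ∀ i, A i i = Aw i i) :
    (fromBlocks A B Bᴴ D).PosDef ∧
      ∀ i j, i ≠ j → (fromBlocks A B Bᴴ D)⁻¹ (Sum.inl i) (Sum.inl j) = 0 := by
  -- D is positive definite
  have hD : D.PosDef := by
    refine posDef_iff_dotProduct_mulVec.mpr ⟨(isHermitian_fromBlocks_iff.1 hMw.1).2.2.2, fun x hx => ?_⟩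
    have hz : Sum.elim (0 : p → ℝ) x ≠ 0 := by
      intro h
      exact hx (funext fun a => congrFun h (Sum.inr a))
    have := hMw.dotProduct_mulVec_pos hz
    simpa [fromBlocks_mulVec, sumElim_dotProduct_sumElim] using this
  haveI hDinv : Invertible D := hD.isUnit.invertible
  -- Schur complement of Mw is positive definite
  have hSw : (Aw - B * D⁻¹ * Bᴴ).PosDef := by
    have hherm : (Aw - B * D⁻¹ * Bᴴ).IsHermitian :=
      (IsHermitian.fromBlocks₂₂ _ _ hD.1).1 hMw.1
    refine posDef_iff_dotProduct_mulVec.mpr ⟨hherm, fun x hx => ?_⟩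
    have key := schur_complement_eq₂₂ Aw B x (-((D⁻¹ * Bᴴ) *ᵥ x)) hD.1
    have hz : Sum.elim x (-((D⁻¹ * Bᴴ) *ᵥ x)) ≠ 0 := by
      intro h
      exact hx (funext fun i => congrFun h (Sum.inl i))
    have hpos := hMw.dotProduct_mulVec_pos hz
    rw [dotProduct_mulVec] at hpos ⊢
    rw [key] at hpos
    simpa using hpos
  -- the Schur complement of M is diagonal with the same diagonal as Sw
  have hdiagS : ∀ i, (A - B * D⁻¹ * Bᴴ) i i = (Aw - B * D⁻¹ * Bᴴ) i i := by
    intro i; simp [Matrix.sub_apply, hdiag]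
  have hSdiag : (A - B * D⁻¹ * Bᴴ) = diagonal (fun i => (Aw - B * D⁻¹ * Bᴴ) i i) := by
    ext i j
    by_cases h : i = j
    · subst h; rw [diagonal_apply_eq]; exact hdiagS i
    · rw [diagonal_apply_ne _ h]; exact hoff i j h
  have hSwDiagPos : ∀ i, 0 < (Aw - B * D⁻¹ * Bᴴ) i i := by
    intro i
    have := hSw.dotProduct_mulVec_pos (x := Pi.single i 1) (by simp [Pi.single_eq_same, funext_iff]; exact ⟨i, by simp⟩)
    simpa [dotProduct, mulVec, Pi.single_apply, Finset.sum_ite_eq] using this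
  have hS : (A - B * D⁻¹ * Bᴴ).PosDef := by
    rw [hSdiag]
    exact (posDef_diagonal_iff).2 hSwDiagPos
  -- M is positive definite
  have hMherm : (fromBlocks A B Bᴴ D).IsHermitian :=
    isHermitian_fromBlocks_iff.2 ⟨hA, rfl, conjTranspose_conjTranspose B, hD.1⟩
  have hM : (fromBlocks A B Bᴴ D).PosDef := by
    refine posDef_iff_dotProduct_mulVec.mpr ⟨hMherm, fun z hz => ?_⟩
    rw [dotProduct_mulVec, ← Sum.elim_comp_inl_inr z, schur_complement_eq₂₂ A B _ _ hD.1]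
    by_cases hx : z ∘ Sum.inl = 0
    · have hy : z ∘ Sum.inr ≠ 0 := by
        intro h
        apply hz
        rw [← Sum.elim_comp_inl_inr z, hx, h]
        simp
      rw [hx]
      have h1 := hD.dotProduct_mulVec_pos hy
      rw [dotProduct_mulVec] at h1
      simpa using h1
    · have h1 : 0 ≤ star ((D⁻¹ * Bᴴ) *ᵥ (z ∘ Sum.inl) + z ∘ Sum.inr) ᵥ* D ⬝ᵥ
          ((D⁻¹ * Bᴴ) *ᵥ (z ∘ Sum.inl) + z ∘ Sum.inr) := by
        rw [← dotProduct_mulVec]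
        exact (posSemidef_iff_dotProduct_mulVec.mp hD.posSemidef).2 _
      have h2 := hS.dotProduct_mulVec_pos hx
      rw [dotProduct_mulVec] at h2
      linarith
  refine ⟨hM, fun i j hij => ?_⟩
  -- compute the inverse via the block inversion formula
  haveI hSinv : Invertible (A - B * ⅟D * Bᴴ) := by
    rw [invOf_eq_nonsing_inv]
    exact hS.isUnit.invertible
  haveI : Invertible (fromBlocks A B Bᴴ D) := fromBlocks₂₂Invertible A B Bᴴ D
  rw [← invOf_eq_nonsing_inv, invOf_fromBlocks₂₂_eq]
  show ⅟(A - B * ⅟D * Bᴴ) i j = 0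
  have hSeq : A - B * ⅟D * Bᴴ = A - B * D⁻¹ * Bᴴ := by rw [invOf_eq_nonsing_inv]
  rw [invOf_eq_nonsing_inv]
  rw [hSeq, hSdiag, inv_diagonal]
  exact diagonal_apply_ne _ hij


/-- For `n ≥ 3` and positive definite `W`, the matrix `Ǩ` obtained from `W` by replacing
its `(1,2)` entry with `W_{1,R} W_{R,R}⁻¹ W_{R,2}`, `R = {3,…,n}`, is positive definite
and its inverse satisfies `(Ǩ⁻¹)₁₂ = 0`.  Hence `Ǩ` is the dual maximum likelihood
estimate of the concentration matrix for the model `L = {Σ : σ₁₂ = 0}`, and the dual ML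
degree of this model is one. -/
theorem dual_MLE_one_zero_restriction
    (n : ℕ) (W : Matrix (Fin (n + 3)) (Fin (n + 3)) ℝ) (hW : W.PosDef) :
    (dualMLEonePair n W).PosDef ∧ (dualMLEonePair n W)⁻¹ 0 1 = 0 := by
  classical
  have h01 : (0 : Fin (n + 3)) ≠ 1 := by
    simp [Fin.ext_iff]
  have hsymm : ∀ i j, W i j = W j i := by
    intro i j
    conv_lhs => rw [← hW.1]
    simp [conjTranspose_apply]
  set R := {i : Fin (n + 3) // i ≠ 0 ∧ i ≠ 1} with hR
  let v : Fin 2 → Fin (n + 3) := ![0, 1]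
  let e : (Fin 2 ⊕ R) ≃ Fin (n + 3) :=
    { toFun := Sum.elim v Subtype.val
      invFun := fun i => if h0 : i = 0 then Sum.inl 0 else
        if h1 : i = 1 then Sum.inl 1 else Sum.inr ⟨i, h0, h1⟩
      left_inv := by
        rintro (i | ⟨i, hi0, hi1⟩)
        · fin_cases i
          · simp [v]
          · simp [v, h01.symm]
        · simp [hi0, hi1]
      right_inv := by
        intro i
        by_cases h0 : i = 0
        · simp [h0, v]
        · by_cases h1 : i = 1
          · simp [h0, h1, v]
          · simp [h0, h1, v] }
  set D : Matrix R R ℝ := Matrix.of fun a b => W a.1 b.1 with hD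
  set k12 : ℝ := ∑ a : R, ∑ b : R, W 0 a.1 * D⁻¹ a b * W b.1 1 with hk12
  set A : Matrix (Fin 2) (Fin 2) ℝ := !![W 0 0, k12; k12, W 1 1] with hA
  set B : Matrix (Fin 2) R ℝ := Matrix.of fun i a => W (v i) a.1 with hB
  set Aw : Matrix (Fin 2) (Fin 2) ℝ := Matrix.of fun i j => W (v i) (v j) with hAw
  -- W in block form
  have hWblk : W.submatrix ⇑e ⇑e = fromBlocks Aw B Bᴴ D := by
    ext z w
    rcases z with i | a <;> rcases w with j | b
    · simp [fromBlocks, submatrix_apply, Aw, e]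
    · simp [fromBlocks, submatrix_apply, B, e]
    · simp [fromBlocks, submatrix_apply, B, e, conjTranspose_apply, hsymm a.1 (v j)]
    · simp [fromBlocks, submatrix_apply, D, e]
  have hMw : (fromBlocks Aw B Bᴴ D).PosDef := hWblk ▸ posDef_submatrix_equiv' hW e
  have hDh : D.IsHermitian := by
    ext a b
    simp [D, conjTranspose_apply, hsymm a.1 b.1]
  have hDinvsymm : ∀ a b : R, D⁻¹ a b = D⁻¹ b a := by
    intro a b
    conv_lhs => rw [← hDh.inv]
    simp [conjTranspose_apply]
  have hBD : ∀ i j : Fin 2, (B * D⁻¹ * Bᴴ) i j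
      = ∑ a : R, ∑ b : R, W (v i) a.1 * D⁻¹ a b * W (v j) b.1 := by
    intro i j
    simp only [Matrix.mul_apply, conjTranspose_apply, star_trivial, Finset.sum_mul]
    rw [Finset.sum_comm]
    refine Finset.sum_congr rfl fun a _ => Finset.sum_congr rfl fun b _ => ?_
    simp [B]
  have hBD01 : (B * D⁻¹ * Bᴴ) 0 1 = k12 := by
    rw [hBD, hk12]
    refine Finset.sum_congr rfl fun a _ => Finset.sum_congr rfl fun b _ => ?_
    simp only [v]
    rw [hsymm b.1 1]
    simp
  have hBD10 : (B * D⁻¹ * Bᴴ) 1 0 = k12 := by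
    rw [hBD, hk12, Finset.sum_comm]
    refine Finset.sum_congr rfl fun b _ => Finset.sum_congr rfl fun a _ => ?_
    simp only [v]
    simp only [Matrix.cons_val_zero, Matrix.cons_val_one, Matrix.head_cons]
    rw [hsymm 1 a.1, hDinvsymm a b]
    ring
  have hAH : A.IsHermitian := by
    ext i j
    fin_cases i <;> fin_cases j <;> simp [A, conjTranspose_apply]
  have hoff : ∀ i j : Fin 2, i ≠ j → (A - B * D⁻¹ * Bᴴ) i j = 0 := by
    intro i j hij
    have hc : (i = 0 ∧ j = 1) ∨ (i = 1 ∧ j = 0) := by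
      revert hij; revert i j; decide
    rcases hc with ⟨hi, hj⟩ | ⟨hi, hj⟩ <;> subst hi <;> subst hj
    · simp only [Matrix.sub_apply]; rw [hBD01]; simp [A]
    · simp only [Matrix.sub_apply]; rw [hBD10]; simp [A]
  have hdiag : ∀ i : Fin 2, A i i = Aw i i := by
    intro i
    fin_cases i <;> simp [A, Aw, v]
  obtain ⟨hMpd, hMinv⟩ := blockMagic A Aw B D hMw hAH hoff hdiag
  have hKblk : (dualMLEonePair n W).submatrix ⇑e ⇑e = fromBlocks A B Bᴴ D := by
    ext z w
    rcases z with i | a <;> rcases w with j | b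
    · have he0 : e (Sum.inl (0 : Fin 2)) = 0 := by simp [e, v]
      have he1 : e (Sum.inl (1 : Fin 2)) = 1 := by simp [e, v]
      have hc : (i = 0 ∧ j = 0) ∨ (i = 0 ∧ j = 1) ∨ (i = 1 ∧ j = 0) ∨ (i = 1 ∧ j = 1) := by
        revert i j; decide
      rcases hc with ⟨hi, hj⟩ | ⟨hi, hj⟩ | ⟨hi, hj⟩ | ⟨hi, hj⟩ <;> subst hi <;> subst hj
      · rw [submatrix_apply, he0]
        simp [dualMLEonePair, A, h01, Ne.symm h01]
      · rw [submatrix_apply, he0, he1]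
        have hA01 : (fromBlocks A B Bᴴ D) (Sum.inl 0) (Sum.inl (1 : Fin 2)) = k12 := by
          simp [fromBlocks, A]
        rw [hA01, hk12, hD]
        simp only [dualMLEonePair, of_apply]
        simp
        congr!
      · rw [submatrix_apply, he0, he1]
        have hA10 : (fromBlocks A B Bᴴ D) (Sum.inl 1) (Sum.inl (0 : Fin 2)) = k12 := by
          simp [fromBlocks, A]
        rw [hA10, hk12, hD]
        simp only [dualMLEonePair, of_apply]
        simp
        congr!
      · rw [submatrix_apply, he1]
        simp [dualMLEonePair, A, h01, Ne.symm h01]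
    · obtain ⟨b, hb0, hb1⟩ := b
      simp [dualMLEonePair, submatrix_apply, fromBlocks, e, B, hb0, hb1]
    · obtain ⟨a, ha0, ha1⟩ := a
      simp [dualMLEonePair, submatrix_apply, fromBlocks, e, B, conjTranspose_apply,
        ha0, ha1, hsymm a (v _)]
    · obtain ⟨a, ha0, ha1⟩ := a
      obtain ⟨b, hb0, hb1⟩ := b
      simp [dualMLEonePair, submatrix_apply, fromBlocks, e, D, ha0, ha1, hb0, hb1]
  have hKeq : dualMLEonePair n W = (fromBlocks A B Bᴴ D).submatrix ⇑e.symm ⇑e.symm := by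
    rw [← hKblk, submatrix_submatrix, Equiv.self_comp_symm, submatrix_id_id]
  have h0 : e.symm 0 = Sum.inl 0 := by
    rw [Equiv.symm_apply_eq]
    simp [e, v]
  have h1 : e.symm 1 = Sum.inl 1 := by
    rw [Equiv.symm_apply_eq]
    simp [e, v]
  constructor
  · rw [hKeq]
    exact posDef_submatrix_equiv' hMpd e.symm
  · rw [hKeq, inv_submatrix_equiv, submatrix_apply, h0, h1]
    exact hMinv 0 1 (by decide)
end
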